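/- Let θ ∈ (0,1), λ ∈ (0,1], and let m ≥ 1 be a real number. Let g and ε be independent real random variables such that Ψ(g) + ε has the same distribution as g and E[|g|^m] < ∞. Then E[|g|^m]^{1/m} ≤ (1/(1−ρ)) · E[|ε|^m]^{1/m}, where ρ = 1 − λ·min(θ, 1−θ) ∈ (0,1). -/

import Mathlib

open Real MeasureTheory ProbabilityTheory
open scoped ENNReal NNReal

/-- One-block pre-arbitrage gap update map of the partially active AMM built on
a G3M with weights `(θ, 1-θ)`. -/
noncomputable def Psi (θ lam g : ℝ) : ℝ :=
  g - Real.log (1 - lam + lam * Real.exp (θ * g))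
    + Real.log (1 - lam + lam * Real.exp (-(1 - θ) * g))

lemma L_pos {lam : ℝ} (h0 : 0 < lam) (h1 : lam ≤ 1) (x : ℝ) :
    0 < 1 - lam + lam * Real.exp x := by
  have := Real.exp_pos x
  nlinarith

lemma L_lb {lam : ℝ} (h0 : 0 < lam) (h1 : lam ≤ 1) (x : ℝ) :
    lam * x ≤ Real.log (1 - lam + lam * Real.exp x) := by
  rw [Real.le_log_iff_exp_le (L_pos h0 h1 x)]
  have h := convexOn_exp.2 (Set.mem_univ x) (Set.mem_univ 0) h0.le
    (by linarith : (0:ℝ) ≤ 1 - lam) (by ring)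
  simp only [smul_eq_mul, mul_zero, add_zero, Real.exp_zero, mul_one] at h
  linarith

lemma L_ub_pos {lam : ℝ} (h0 : 0 < lam) (h1 : lam ≤ 1) {x : ℝ} (hx : 0 ≤ x) :
    Real.log (1 - lam + lam * Real.exp x) ≤ x := by
  rw [Real.log_le_iff_le_exp (L_pos h0 h1 x)]
  have := Real.one_le_exp hx
  nlinarith

lemma L_ub_neg {lam : ℝ} (h0 : 0 < lam) (h1 : lam ≤ 1) {x : ℝ} (hx : x ≤ 0) :
    Real.log (1 - lam + lam * Real.exp x) ≤ 0 := by
  apply Real.log_nonpos (L_pos h0 h1 x).le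
  have := Real.exp_le_one_iff.mpr hx
  nlinarith

lemma Psi_abs_le {θ lam : ℝ} (hθ : θ ∈ Set.Ioo (0:ℝ) 1) (hlam : lam ∈ Set.Ioc (0:ℝ) 1)
    (g : ℝ) : |Psi θ lam g| ≤ (1 - lam * min θ (1 - θ)) * |g| := by
  obtain ⟨hθ0, hθ1⟩ := hθ
  obtain ⟨hl0, hl1⟩ := hlam
  have hmin1 : lam * min θ (1 - θ) ≤ lam * θ :=
    mul_le_mul_of_nonneg_left (min_le_left _ _) hl0.le
  have hmin2 : lam * min θ (1 - θ) ≤ lam * (1 - θ) :=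
    mul_le_mul_of_nonneg_left (min_le_right _ _) hl0.le
  rcases le_total 0 g with hg | hg
  · rw [abs_of_nonneg hg, abs_le]
    have h1 := L_lb hl0 hl1 (θ * g)
    have h2 := L_ub_neg hl0 hl1 (x := -(1 - θ) * g) (by nlinarith)
    have h3 := L_ub_pos hl0 hl1 (x := θ * g) (by positivity)
    have h4 := L_lb hl0 hl1 (-(1 - θ) * g)
    unfold Psi
    constructor <;> nlinarith
  · rw [abs_of_nonpos hg, abs_le]
    have h1 := L_ub_neg hl0 hl1 (x := θ * g) (by nlinarith)
    have h2 := L_lb hl0 hl1 (-(1 - θ) * g)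
    have h3 := L_lb hl0 hl1 (θ * g)
    have h4 := L_ub_pos hl0 hl1 (x := -(1 - θ) * g) (by nlinarith)
    unfold Psi
    constructor <;> nlinarith

theorem stmt6 {Ω : Type*} [MeasurableSpace Ω] (P : Measure Ω) [IsProbabilityMeasure P]
    (θ lam m : ℝ) (hθ : θ ∈ Set.Ioo (0:ℝ) 1) (hlam : lam ∈ Set.Ioc (0:ℝ) 1)
    (hm : 1 ≤ m) (g ε : Ω → ℝ) (hgm : Measurable g) (hεm : Measurable ε)
    (hindep : IndepFun g ε P)
    (hstat : P.map (fun ω => Psi θ lam (g ω) + ε ω) = P.map g)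
    (hmom : MemLp g (ENNReal.ofReal m) P) :
    eLpNorm g (ENNReal.ofReal m) P ≤
      ENNReal.ofReal (1 / (1 - (1 - lam * min θ (1 - θ)))) *
        eLpNorm ε (ENNReal.ofReal m) P := by
  obtain ⟨hθ0, hθ1⟩ := hθ
  obtain ⟨hl0, hl1⟩ := hlam
  set p : ENNReal := ENNReal.ofReal m with hp
  set ρ : ℝ := 1 - lam * min θ (1 - θ) with hρ
  set s : ℝ := lam * min θ (1 - θ) with hs
  have hs0 : 0 < s := by
    have : 0 < min θ (1 - θ) := lt_min (by linarith) (by linarith)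
    positivity
  have hρ0 : 0 ≤ ρ := by
    have h1 : min θ (1 - θ) ≤ θ := min_le_left _ _
    nlinarith
  have hp1 : 1 ≤ p := by
    rw [hp, ENNReal.one_le_ofReal]; exact hm
  -- measurability of Psi ∘ g
  have hPsig : Measurable fun ω => Psi θ lam (g ω) := by
    unfold Psi
    exact ((hgm.sub ((measurable_const.add (measurable_const.mul
      ((measurable_const.mul hgm).exp))).log)).add
      ((measurable_const.add (measurable_const.mul
      ((measurable_const.mul hgm).exp))).log))
  have hXm : Measurable fun ω => Psi θ lam (g ω) + ε ω := hPsig.add hεm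
  -- equality of norms via stationarity
  have hkey : eLpNorm g p P = eLpNorm (fun ω => Psi θ lam (g ω) + ε ω) p P := by
    have e1 : eLpNorm (id : ℝ → ℝ) p (P.map g) = eLpNorm g p P := by
      rw [eLpNorm_map_measure aestronglyMeasurable_id hgm.aemeasurable]
      rfl
    have e2 : eLpNorm (id : ℝ → ℝ) p (P.map (fun ω => Psi θ lam (g ω) + ε ω))
        = eLpNorm (fun ω => Psi θ lam (g ω) + ε ω) p P := by
      rw [eLpNorm_map_measure aestronglyMeasurable_id hXm.aemeasurable]
      rfl
    rw [← e1, ← e2, hstat]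
  -- triangle inequality
  have htri : eLpNorm (fun ω => Psi θ lam (g ω) + ε ω) p P
      ≤ eLpNorm (fun ω => Psi θ lam (g ω)) p P + eLpNorm ε p P :=
    eLpNorm_add_le hPsig.aestronglyMeasurable hεm.aestronglyMeasurable hp1
  -- contraction bound
  have hcon : eLpNorm (fun ω => Psi θ lam (g ω)) p P ≤ ENNReal.ofReal ρ * eLpNorm g p P := by
    have hmono : eLpNorm (fun ω => Psi θ lam (g ω)) p P
        ≤ eLpNorm (fun ω => ρ • g ω) p P := by
      apply eLpNorm_mono
      intro ω
      rw [Real.norm_eq_abs, Real.norm_eq_abs, smul_eq_mul, abs_mul, abs_of_nonneg hρ0]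
      exact Psi_abs_le ⟨hθ0, hθ1⟩ ⟨hl0, hl1⟩ (g ω)
    calc eLpNorm (fun ω => Psi θ lam (g ω)) p P ≤ eLpNorm (ρ • g) p P := hmono
      _ = (‖ρ‖₊ : ℝ≥0∞) * eLpNorm g p P := eLpNorm_const_smul ρ g p P
      _ = ENNReal.ofReal ρ * eLpNorm g p P := by
          congr 1
          exact Real.enorm_eq_ofReal hρ0
  have hfin : eLpNorm g p P ≠ ⊤ := hmom.eLpNorm_ne_top
  -- combine
  have hmain : ENNReal.ofReal s * eLpNorm g p P ≤ eLpNorm ε p P := by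
    have hsum : ENNReal.ofReal s * eLpNorm g p P + ENNReal.ofReal ρ * eLpNorm g p P
        ≤ eLpNorm ε p P + ENNReal.ofReal ρ * eLpNorm g p P := by
      have : ENNReal.ofReal s * eLpNorm g p P + ENNReal.ofReal ρ * eLpNorm g p P
          = eLpNorm g p P := by
        rw [← add_mul, ← ENNReal.ofReal_add hs0.le hρ0]
        have : s + ρ = 1 := by rw [hs, hρ]; ring
        rw [this, ENNReal.ofReal_one, one_mul]
      rw [this]
      calc eLpNorm g p P = eLpNorm (fun ω => Psi θ lam (g ω) + ε ω) p P := hkey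
        _ ≤ eLpNorm (fun ω => Psi θ lam (g ω)) p P + eLpNorm ε p P := htri
        _ ≤ ENNReal.ofReal ρ * eLpNorm g p P + eLpNorm ε p P := by gcongr
        _ = eLpNorm ε p P + ENNReal.ofReal ρ * eLpNorm g p P := add_comm _ _
    exact (ENNReal.add_le_add_iff_right
      (ENNReal.mul_ne_top ENNReal.ofReal_ne_top hfin)).mp hsum
  have hsne : ENNReal.ofReal s ≠ 0 := (ENNReal.ofReal_pos.mpr hs0).ne'
  have h1s : ENNReal.ofReal (1 / (1 - ρ)) = (ENNReal.ofReal s)⁻¹ := by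
    have hh : (1:ℝ) - ρ = s := by rw [hρ]; ring
    rw [hh, one_div, ENNReal.ofReal_inv_of_pos hs0]
  calc eLpNorm g p P
      = (ENNReal.ofReal s)⁻¹ * (ENNReal.ofReal s * eLpNorm g p P) := by
        rw [← mul_assoc, ENNReal.inv_mul_cancel hsne ENNReal.ofReal_ne_top, one_mul]
    _ ≤ (ENNReal.ofReal s)⁻¹ * eLpNorm ε p P := by gcongr
    _ = ENNReal.ofReal (1 / (1 - ρ)) * eLpNorm ε p P := by rw [h1s]
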